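/- Let h : P^1 → P^1 be a nonconstant morphism over a field K of characteristic 0, let H = (h,h) act coordinatewise on P^1 × P^1, let Δ be the diagonal divisor, and let Δ_H = H*(Δ). Then for any point (P,Q) ∈ P^1(K) × P^1(K) the multiplicity of Δ_H at (P,Q) is at most max over x ∈ P^1 of the ramification index e(x/h(x)); moreover, every irreducible component of Δ_H has multiplicity one. -/

import Mathlib

open Polynomial

/-- The ramification index `e(x / h(x))` of the morphism induced by `h` at the point `x`. -/
noncomputable def ramIdx {K : Type*} [CommRing K] (h : Polynomial K) (x : K) : ℕ :=
  (h - C (h.eval x)).rootMultiplicity x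

/-- The multiplicity (order of vanishing) of the plane curve/divisor defined by the
bivariate polynomial `F` at the point `(P, Q)`: the smallest total degree of a monomial
appearing in `F(X₀ + P, X₁ + Q)` (and `⊤` when `F = 0`). -/
noncomputable def multAt {K : Type*} [CommRing K] (F : MvPolynomial (Fin 2) K) (P Q : K) :
    ℕ∞ :=
  ((MvPolynomial.bind₁
      (fun i : Fin 2 => MvPolynomial.X i + MvPolynomial.C (if i = 0 then P else Q)) F).support).inf
    fun m => ((m.sum fun _ e => e : ℕ) : ℕ∞)

namespace Stmt5Aux

variable {K : Type*} [Field K]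

lemma coeff_single_aeval {σ : Type*} [DecidableEq σ] (i : σ) (p : K[X]) (n : ℕ) :
    MvPolynomial.coeff (Finsupp.single i n)
      (Polynomial.aeval (MvPolynomial.X i : MvPolynomial σ K) p) = p.coeff n := by
  induction p using Polynomial.induction_on' with
  | add f g hf hg => simp [hf, hg]
  | monomial k a =>
      simp [Polynomial.aeval_monomial, MvPolynomial.coeff_C_mul,
        MvPolynomial.X_pow_eq_monomial, MvPolynomial.coeff_monomial,
        Polynomial.coeff_monomial, MvPolynomial.algebraMap_eq,
        (Finsupp.single_injective i).eq_iff]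

lemma coeff_single_aeval_ne {σ : Type*} [DecidableEq σ] {i j : σ} (hij : j ≠ i) (p : K[X])
    {n : ℕ} (hn : n ≠ 0) :
    MvPolynomial.coeff (Finsupp.single i n)
      (Polynomial.aeval (MvPolynomial.X j : MvPolynomial σ K) p) = 0 := by
  have hne : ∀ k : ℕ, Finsupp.single j k ≠ Finsupp.single i n := by
    intro k hcontra
    apply hn
    have h2 := DFunLike.congr_fun hcontra i
    simpa [Finsupp.single_apply, hij] using h2.symm
  induction p using Polynomial.induction_on' with
  | add f g hf hg => simp [hf, hg]
  | monomial k a =>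
      simp [Polynomial.aeval_monomial, MvPolynomial.coeff_C_mul,
        MvPolynomial.X_pow_eq_monomial, MvPolynomial.coeff_monomial,
        MvPolynomial.algebraMap_eq, hne k]

lemma aeval_X_ne_zero {σ : Type*} [DecidableEq σ] (i : σ) {p : K[X]} (hp : p ≠ 0) :
    Polynomial.aeval (MvPolynomial.X i : MvPolynomial σ K) p ≠ 0 := by
  intro h0
  apply hp
  ext n
  have hc := coeff_single_aeval (K := K) i p n
  rw [h0] at hc
  simpa using hc.symm

lemma degreeOf_zero_of_dvd {a : MvPolynomial (Fin 2) K} {p : K[X]} (hp : p ≠ 0)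
    (hd : a ∣ Polynomial.aeval (MvPolynomial.X (1 : Fin 2)) p) :
    MvPolynomial.degreeOf 0 a = 0 := by
  classical
  have hφd : MvPolynomial.finSuccEquiv K 1 a
      ∣ MvPolynomial.finSuccEquiv K 1 (Polynomial.aeval (MvPolynomial.X (1 : Fin 2)) p) :=
    map_dvd (MvPolynomial.finSuccEquiv K 1 : MvPolynomial (Fin (1+1)) K →+* Polynomial (MvPolynomial (Fin 1) K)) hd
  have himg : MvPolynomial.finSuccEquiv K 1 (Polynomial.aeval (MvPolynomial.X (1 : Fin 2)) p)
      = Polynomial.C (Polynomial.aeval (MvPolynomial.X (0 : Fin 1)) p) := by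
    rw [← Polynomial.aeval_algHom_apply]
    have h1 : MvPolynomial.finSuccEquiv K 1 (MvPolynomial.X (1 : Fin 2))
        = Polynomial.C (MvPolynomial.X (0 : Fin 1)) := by
      have h2 : (1 : Fin 2) = Fin.succ 0 := rfl
      rw [h2, MvPolynomial.finSuccEquiv_X_succ]
    rw [h1]
    simpa using (Polynomial.aeval_algHom_apply (Polynomial.CAlgHom (R := K))
      (MvPolynomial.X (0 : Fin 1)) p)
  rw [himg] at hφd
  have hC0 : (Polynomial.C (Polynomial.aeval (MvPolynomial.X (0 : Fin 1)) p) :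
      Polynomial (MvPolynomial (Fin 1) K)) ≠ 0 := by
    simpa using aeval_X_ne_zero (0 : Fin 1) hp
  have hle := Polynomial.natDegree_le_of_dvd hφd hC0
  rw [Polynomial.natDegree_C] at hle
  have := MvPolynomial.natDegree_finSuccEquiv a
  omega

lemma degreeOf_one_of_dvd {a : MvPolynomial (Fin 2) K} {p : K[X]} (hp : p ≠ 0)
    (hd : a ∣ Polynomial.aeval (MvPolynomial.X (0 : Fin 2)) p) :
    MvPolynomial.degreeOf 1 a = 0 := by
  classical
  set e := MvPolynomial.renameEquiv K (Equiv.swap (0 : Fin 2) 1) with he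
  have h1 : e a ∣ e (Polynomial.aeval (MvPolynomial.X (0 : Fin 2)) p) := map_dvd e hd
  have h2 : e (Polynomial.aeval (MvPolynomial.X (0 : Fin 2)) p)
      = Polynomial.aeval (MvPolynomial.X (1 : Fin 2)) p := by
    rw [← Polynomial.aeval_algHom_apply]
    congr 1
    rw [he]
    simp [MvPolynomial.renameEquiv_apply, Equiv.swap_apply_left]
  rw [h2] at h1
  have h3 := degreeOf_zero_of_dvd hp h1
  have h4 : MvPolynomial.degreeOf ((Equiv.swap (0 : Fin 2) 1) 1)
      (MvPolynomial.rename (Equiv.swap (0 : Fin 2) 1) a) = MvPolynomial.degreeOf 1 a :=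
    MvPolynomial.degreeOf_rename_of_injective (Equiv.injective _) 1
  rw [Equiv.swap_apply_right] at h4
  rw [← h4]
  simpa [he, MvPolynomial.renameEquiv_apply] using h3

lemma eq_C_of_degreeOf (a : MvPolynomial (Fin 2) K) (h0 : MvPolynomial.degreeOf 0 a = 0)
    (h1 : MvPolynomial.degreeOf 1 a = 0) :
    a = MvPolynomial.C (MvPolynomial.coeff 0 a) := by
  have hall : ∀ i : Fin 2, MvPolynomial.degreeOf i a = 0 := by
    intro i
    fin_cases i
    · exact h0
    · exact h1
  have ht : a.totalDegree = 0 := by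
    rw [MvPolynomial.totalDegree_eq_zero_iff]
    intro m hm i
    have hle : m i ≤ MvPolynomial.degreeOf i a := by
      rw [MvPolynomial.degreeOf_eq_sup]
      exact Finset.le_sup (f := fun m' : Fin 2 →₀ ℕ => m' i) hm
    rw [hall i] at hle
    omega
  rw [MvPolynomial.totalDegree_eq_zero_iff] at ht
  ext m
  by_cases hm : m = 0
  · simp [hm]
  · rw [MvPolynomial.coeff_C, if_neg (Ne.symm hm)]
    by_contra hc
    have hmem : m ∈ a.support := MvPolynomial.mem_support_iff.mpr hc
    apply hm
    ext i
    exact ht m hmem i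

lemma pderiv_aeval_self (i : Fin 2) (p : K[X]) :
    MvPolynomial.pderiv i (Polynomial.aeval (MvPolynomial.X i : MvPolynomial (Fin 2) K) p)
      = Polynomial.aeval (MvPolynomial.X i) (Polynomial.derivative p) := by
  induction p using Polynomial.induction_on' with
  | add f g hf hg => simp [hf, hg]
  | monomial n a =>
      simp only [Polynomial.aeval_monomial, Polynomial.derivative_monomial,
        MvPolynomial.pderiv_C_mul, MvPolynomial.pderiv_pow, MvPolynomial.pderiv_X_self,
        mul_one, MvPolynomial.algebraMap_eq, map_mul]
      rw [← MvPolynomial.C_eq_coe_nat]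
      ring

lemma pderiv_aeval_ne {i j : Fin 2} (hij : j ≠ i) (p : K[X]) :
    MvPolynomial.pderiv i (Polynomial.aeval (MvPolynomial.X j : MvPolynomial (Fin 2) K) p)
      = 0 := by
  induction p using Polynomial.induction_on' with
  | add f g hf hg => simp [hf, hg]
  | monomial n a =>
      simp [Polynomial.aeval_monomial, MvPolynomial.pderiv_C_mul, MvPolynomial.pderiv_pow,
        MvPolynomial.pderiv_X_of_ne hij]

lemma sub_C_ne_zero {h : K[X]} (hdeg : 0 < h.natDegree) (c : K) : h - C c ≠ 0 := by
  intro hz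
  have h1 : h = C c := sub_eq_zero.mp hz
  rw [h1, natDegree_C] at hdeg
  exact lt_irrefl 0 hdeg

lemma ram_le (h : K[X]) (hdeg : 0 < h.natDegree) (x : K) : ramIdx h x ≤ h.natDegree := by
  have hne : h - C (h.eval x) ≠ 0 := sub_C_ne_zero hdeg _
  have hdvd := Polynomial.pow_rootMultiplicity_dvd (h - C (h.eval x)) x
  have hle := Polynomial.natDegree_le_of_dvd hdvd hne
  rw [Polynomial.natDegree_pow, Polynomial.natDegree_X_sub_C, mul_one,
    Polynomial.natDegree_sub_C] at hle
  exact hle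

end Stmt5Aux

open Stmt5Aux in
/-- Let `h` be a nonconstant morphism (in an affine chart, a nonconstant polynomial) over a
field of characteristic `0`, let `H = (h, h)` act on `ℙ¹ × ℙ¹`, and let
`Δ_H = H^*(Δ)` be the pullback of the diagonal, cut out by `h(x) - h(y) = 0`.  Then the
multiplicity of `Δ_H` at any point `(P, Q)` is at most `max_x e(x / h(x))`, and every
irreducible component of `Δ_H` occurs with multiplicity one (the defining equation is
squarefree). -/
theorem stmt5 {K : Type*} [Field K] [CharZero K] (h : Polynomial K)
    (hdeg : 0 < h.natDegree)
    (F : MvPolynomial (Fin 2) K)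
    (hFdef : F = Polynomial.aeval (MvPolynomial.X 0) h - Polynomial.aeval (MvPolynomial.X 1) h) :
    (∀ P Q : K, multAt F P Q ≤ ((⨆ x : K, ramIdx h x : ℕ) : ℕ∞)) ∧ Squarefree F := by
  classical
  have hone : (1 : Fin 2) ≠ 0 := by decide
  have hzne : (0 : Fin 2) ≠ 1 := by decide
  have hh0 : h ≠ 0 := fun hz => by rw [hz, Polynomial.natDegree_zero] at hdeg; omega
  constructor
  · -- multiplicity bound
    intro P Q
    set f : Fin 2 → MvPolynomial (Fin 2) K :=
      fun i => MvPolynomial.X i + MvPolynomial.C (if i = 0 then P else Q) with hf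
    have hG : MvPolynomial.bind₁ f F
        = Polynomial.aeval (MvPolynomial.X (0 : Fin 2)) (h.comp (Polynomial.X + C P))
          - Polynomial.aeval (MvPolynomial.X (1 : Fin 2)) (h.comp (Polynomial.X + C Q)) := by
      rw [hFdef, map_sub]
      congr 1
      · rw [Polynomial.aeval_comp, ← Polynomial.aeval_algHom_apply (MvPolynomial.bind₁ f)]
        simp [hf]
      · rw [Polynomial.aeval_comp, ← Polynomial.aeval_algHom_apply (MvPolynomial.bind₁ f)]
        simp [hf]
    have hbdd : BddAbove (Set.range fun x : K => ramIdx h x) := by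
      refine ⟨h.natDegree, ?_⟩
      rintro y ⟨x, rfl⟩
      exact ram_le h hdeg x
    by_cases heq : h.eval P = h.eval Q
    · -- use exponent e = ramIdx h P
      set e := ramIdx h P with hedef
      have hps : h - C (h.eval P) ≠ 0 := sub_C_ne_zero hdeg _
      have hepos : 0 < e := by
        rw [hedef, ramIdx]
        rw [Polynomial.rootMultiplicity_pos hps]
        simp [Polynomial.IsRoot]
      set r := (h - C (h.eval P)) /ₘ (Polynomial.X - C P) ^ e with hrdef
      have hfact : (Polynomial.X - C P) ^ e * r = h - C (h.eval P) :=
        Polynomial.pow_mul_divByMonic_rootMultiplicity_eq _ _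
      have hre : r.eval P ≠ 0 :=
        Polynomial.eval_divByMonic_pow_rootMultiplicity_ne_zero P hps
      have hcomp : h.comp (Polynomial.X + C P) - C (h.eval P)
          = Polynomial.X ^ e * (r.comp (Polynomial.X + C P)) := by
        have hc := congrArg (fun q : K[X] => q.comp (Polynomial.X + C P)) hfact
        simp only [Polynomial.mul_comp, Polynomial.pow_comp, Polynomial.sub_comp,
          Polynomial.X_comp, Polynomial.C_comp, add_sub_cancel_right] at hc
        rw [← hc]
      have hcoe : (h.comp (Polynomial.X + C P)).coeff e ≠ 0 := by
        have h1 : (h.comp (Polynomial.X + C P)).coeff e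
            = (h.comp (Polynomial.X + C P) - C (h.eval P)).coeff e := by
          rw [Polynomial.coeff_sub, Polynomial.coeff_C, if_neg hepos.ne', sub_zero]
        rw [h1, hcomp]
        have h2 : (Polynomial.X ^ e * r.comp (Polynomial.X + C P)).coeff (0 + e)
            = (r.comp (Polynomial.X + C P)).coeff 0 := Polynomial.coeff_X_pow_mul _ _ _
        rw [zero_add] at h2
        rw [h2, Polynomial.coeff_zero_eq_eval_zero, Polynomial.eval_comp]
        simpa using hre
      have hmem : Finsupp.single (0 : Fin 2) e ∈ (MvPolynomial.bind₁ f F).support := by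
        rw [MvPolynomial.mem_support_iff, hG, MvPolynomial.coeff_sub,
          coeff_single_aeval, coeff_single_aeval_ne hone _ hepos.ne', sub_zero]
        exact hcoe
      have hinf : multAt F P Q ≤ ((e : ℕ) : ℕ∞) := by
        have := Finset.inf_le (f := fun m : Fin 2 →₀ ℕ => ((m.sum fun _ k => k : ℕ) : ℕ∞)) hmem
        rw [multAt]
        refine this.trans (le_of_eq ?_)
        rw [Finsupp.sum_single_index]
        rfl
      refine hinf.trans ?_
      have hle : e ≤ ⨆ x : K, ramIdx h x := le_ciSup hbdd P
      exact_mod_cast hle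
    · -- constant term is nonzero
      have hmem : (0 : Fin 2 →₀ ℕ) ∈ (MvPolynomial.bind₁ f F).support := by
        rw [MvPolynomial.mem_support_iff, hG, MvPolynomial.coeff_sub]
        have c1 : MvPolynomial.coeff 0
            (Polynomial.aeval (MvPolynomial.X (0 : Fin 2)) (h.comp (Polynomial.X + C P)))
            = (h.comp (Polynomial.X + C P)).coeff 0 := by
          simpa using coeff_single_aeval (K := K) (0 : Fin 2) (h.comp (Polynomial.X + C P)) 0
        have c2 : MvPolynomial.coeff 0
            (Polynomial.aeval (MvPolynomial.X (1 : Fin 2)) (h.comp (Polynomial.X + C Q)))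
            = (h.comp (Polynomial.X + C Q)).coeff 0 := by
          simpa using coeff_single_aeval (K := K) (1 : Fin 2) (h.comp (Polynomial.X + C Q)) 0
        rw [c1, c2, Polynomial.coeff_zero_eq_eval_zero, Polynomial.coeff_zero_eq_eval_zero,
          Polynomial.eval_comp, Polynomial.eval_comp]
        simp only [Polynomial.eval_add, Polynomial.eval_X, Polynomial.eval_C, zero_add]
        exact sub_ne_zero_of_ne heq
      have hinf : multAt F P Q ≤ ((0 : ℕ) : ℕ∞) := by
        have := Finset.inf_le (f := fun m : Fin 2 →₀ ℕ => ((m.sum fun _ k => k : ℕ) : ℕ∞)) hmem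
        rw [multAt]
        simpa using this
      refine hinf.trans ?_
      simp
  · -- squarefree
    have hF0 : F ≠ 0 := by
      intro h0
      have hc : MvPolynomial.coeff (Finsupp.single (0 : Fin 2) h.natDegree) F = 0 := by
        rw [h0]; simp
      rw [hFdef, MvPolynomial.coeff_sub, coeff_single_aeval,
        coeff_single_aeval_ne hone _ hdeg.ne', sub_zero] at hc
      exact Polynomial.leadingCoeff_ne_zero.mpr hh0 hc
    have hd' : Polynomial.derivative h ≠ 0 := by
      intro h0
      have := Polynomial.natDegree_eq_zero_of_derivative_eq_zero h0
      omega
    intro a ha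
    have hane : a ≠ 0 := by
      rintro rfl
      rw [zero_mul, zero_dvd_iff] at ha
      exact hF0 ha
    obtain ⟨b, hb⟩ := ha
    have hp0 : MvPolynomial.pderiv (0 : Fin 2) F
        = Polynomial.aeval (MvPolynomial.X (0 : Fin 2)) (Polynomial.derivative h) := by
      rw [hFdef, map_sub, pderiv_aeval_self, pderiv_aeval_ne hone, sub_zero]
    have hp1 : MvPolynomial.pderiv (1 : Fin 2) F
        = -Polynomial.aeval (MvPolynomial.X (1 : Fin 2)) (Polynomial.derivative h) := by
      rw [hFdef, map_sub, pderiv_aeval_self, pderiv_aeval_ne hzne, zero_sub]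
    have hdvd0 : a ∣ Polynomial.aeval (MvPolynomial.X (0 : Fin 2)) (Polynomial.derivative h) := by
      rw [← hp0, hb, MvPolynomial.pderiv_mul, MvPolynomial.pderiv_mul]
      exact ⟨MvPolynomial.pderiv 0 a * b + MvPolynomial.pderiv 0 a * b
        + a * MvPolynomial.pderiv 0 b, by ring⟩
    have hdvd1 : a ∣ Polynomial.aeval (MvPolynomial.X (1 : Fin 2)) (Polynomial.derivative h) := by
      rw [← dvd_neg, ← hp1, hb, MvPolynomial.pderiv_mul, MvPolynomial.pderiv_mul]
      exact ⟨MvPolynomial.pderiv 1 a * b + MvPolynomial.pderiv 1 a * b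
        + a * MvPolynomial.pderiv 1 b, by ring⟩
    have d0 : MvPolynomial.degreeOf 0 a = 0 := degreeOf_zero_of_dvd hd' hdvd1
    have d1 : MvPolynomial.degreeOf 1 a = 0 := degreeOf_one_of_dvd hd' hdvd0
    have haC : a = MvPolynomial.C (MvPolynomial.coeff 0 a) := eq_C_of_degreeOf a d0 d1
    have hcne : MvPolynomial.coeff 0 a ≠ 0 := by
      intro h0
      rw [h0, map_zero] at haC
      exact hane haC
    rw [haC]
    exact IsUnit.of_mul_eq_one (MvPolynomial.C (MvPolynomial.coeff 0 a)⁻¹)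
      (by rw [← map_mul, mul_inv_cancel₀ hcne, map_one])
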